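/- (Havel–Hakimi, converse direction) If the non-increasing sequence s : d₁, d₂, …, d_n (n ≥ 2, d₁ ≥ 1) is graphical, then the sequence s₁ : d₂-1, d₃-1, …, d_{d₁+1}-1, d_{d₁+2}, …, d_n is graphical. -/

import Mathlib

open scoped Classical

/-- A list of naturals is graphical if it is the multiset of degrees of a simple graph. -/
def Graphical (l : List ℕ) : Prop :=
  ∃ (k : ℕ) (G : SimpleGraph (Fin k)),
    Finset.univ.val.map (fun v => G.degree v) = (l : Multiset ℕ)

open Finset SimpleGraph

set_option maxHeartbeats 1000000
set_option linter.unusedSectionVars false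
set_option linter.unusedVariables false

variable {V : Type*} [Fintype V] [DecidableEq V]


lemma card_insert_erase {s : Finset V} {a b : V} (ha : a ∈ s) (hb : b ∉ s) :
    (insert b (s.erase a)).card = s.card := by
  rw [Finset.card_insert_of_notMem (fun h => hb (Finset.mem_of_mem_erase h)),
    Finset.card_erase_of_mem ha]
  have := Finset.card_pos.2 ⟨a, ha⟩
  omega

def switchGraph (G : SimpleGraph V) (v w u x : V) : SimpleGraph V where
  Adj a b := a ≠ b ∧
    ((G.Adj a b ∧ ¬((a = v ∧ b = w) ∨ (a = w ∧ b = v)) ∧ ¬((a = u ∧ b = x) ∨ (a = x ∧ b = u)))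
      ∨ ((a = v ∧ b = u) ∨ (a = u ∧ b = v)) ∨ ((a = w ∧ b = x) ∨ (a = x ∧ b = w)))
  symm := by
    constructor
    intro a b hab
    obtain ⟨hne, hab⟩ := hab
    refine ⟨hne.symm, ?_⟩
    have hs : G.Adj a b → G.Adj b a := fun h => h.symm
    tauto
  loopless := ⟨by intro a h; exact h.1 rfl⟩

lemma switchGraph_adj (G : SimpleGraph V) (v w u x a b : V) :
    (switchGraph G v w u x).Adj a b ↔ a ≠ b ∧
    ((G.Adj a b ∧ ¬((a = v ∧ b = w) ∨ (a = w ∧ b = v)) ∧ ¬((a = u ∧ b = x) ∨ (a = x ∧ b = u)))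
      ∨ ((a = v ∧ b = u) ∨ (a = u ∧ b = v)) ∨ ((a = w ∧ b = x) ∨ (a = x ∧ b = w))) := Iff.rfl

section
variable {G : SimpleGraph V} {v w u x : V}
  (hvw : G.Adj v w) (hux : G.Adj u x) (hvu : ¬ G.Adj v u) (hwx : ¬ G.Adj w x)
  (hvx : v ≠ x) (hwu : w ≠ u) (hvu' : v ≠ u) (hwx' : w ≠ x)

include hvw hux hvu hwx hvx hwu hvu' hwx'

lemma switch_nbhd_v :
    (switchGraph G v w u x).neighborFinset v = insert u ((G.neighborFinset v).erase w) := by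
  have hvw' : v ≠ w := G.ne_of_adj hvw
  have hux' : u ≠ x := G.ne_of_adj hux
  ext b
  simp only [mem_neighborFinset, switchGraph_adj, Finset.mem_insert, Finset.mem_erase]
  constructor
  · rintro ⟨hne, (⟨h1, h2, h3⟩ | (⟨_, rfl⟩ | ⟨h, rfl⟩) | (⟨h, _⟩ | ⟨h, rfl⟩))⟩ <;> tauto
  · rintro (rfl | ⟨hbw, hb⟩)
    · exact ⟨hvu', Or.inr (Or.inl (Or.inl (by simp)))⟩
    · exact ⟨G.ne_of_adj hb, Or.inl ⟨hb, by tauto,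
        by rintro (⟨rfl, _⟩ | ⟨rfl, _⟩) <;> tauto⟩⟩

lemma switch_nbhd_w :
    (switchGraph G v w u x).neighborFinset w = insert x ((G.neighborFinset w).erase v) := by
  have hvw' : v ≠ w := G.ne_of_adj hvw
  have hux' : u ≠ x := G.ne_of_adj hux
  ext b
  simp only [mem_neighborFinset, switchGraph_adj, Finset.mem_insert, Finset.mem_erase]
  constructor
  · rintro ⟨hne, (⟨h1, h2, h3⟩ | (⟨h, rfl⟩ | ⟨h, rfl⟩) | (⟨_, rfl⟩ | ⟨h, rfl⟩))⟩ <;> tauto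
  · rintro (rfl | ⟨hbv, hb⟩)
    · exact ⟨hwx', Or.inr (Or.inr (Or.inl (by simp)))⟩
    · refine ⟨G.ne_of_adj hb, Or.inl ⟨hb, by rintro (⟨rfl, _⟩ | ⟨_, rfl⟩) <;> tauto,
        by rintro (⟨rfl, _⟩ | ⟨rfl, _⟩) <;> tauto⟩⟩

end

section
variable {G : SimpleGraph V} {v w u x : V}
  (hvw : G.Adj v w) (hux : G.Adj u x) (hvu : ¬ G.Adj v u) (hwx : ¬ G.Adj w x)
  (hvx : v ≠ x) (hwu : w ≠ u) (hvu' : v ≠ u) (hwx' : w ≠ x)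

lemma switchGraph_comm : switchGraph G v w u x = switchGraph G u x v w := by
  ext a b
  simp only [switchGraph_adj]
  tauto

include hvw hux hvu hwx hvx hwu hvu' hwx'

lemma switch_nbhd_u :
    (switchGraph G v w u x).neighborFinset u = insert v ((G.neighborFinset u).erase x) := by
  rw [switchGraph_comm]
  exact switch_nbhd_v hux hvw (fun h => hvu h.symm) (fun h => hwx h.symm)
    hwu.symm hvx.symm hvu'.symm hwx'.symm

lemma switch_nbhd_x :
    (switchGraph G v w u x).neighborFinset x = insert w ((G.neighborFinset x).erase u) := by
  rw [switchGraph_comm]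
  exact switch_nbhd_w hux hvw (fun h => hvu h.symm) (fun h => hwx h.symm)
    hwu.symm hvx.symm hvu'.symm hwx'.symm

lemma switch_nbhd_other {z : V} (h1 : z ≠ v) (h2 : z ≠ w) (h3 : z ≠ u) (h4 : z ≠ x) :
    (switchGraph G v w u x).neighborFinset z = G.neighborFinset z := by
  ext b
  simp only [mem_neighborFinset, switchGraph_adj]
  constructor
  · rintro ⟨hne, (⟨hb, _, _⟩ | h | h)⟩ <;> tauto
  · intro hb
    exact ⟨G.ne_of_adj hb, Or.inl ⟨hb, by tauto, by tauto⟩⟩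

lemma switch_degree (z : V) :
    (switchGraph G v w u x).degree z = G.degree z := by
  have hvw' : v ≠ w := G.ne_of_adj hvw
  have hux' : u ≠ x := G.ne_of_adj hux
  rw [← card_neighborFinset_eq_degree, ← card_neighborFinset_eq_degree]
  by_cases h1 : z = v
  · subst h1
    rw [switch_nbhd_v hvw hux hvu hwx hvx hwu hvu' hwx']
    exact card_insert_erase ((mem_neighborFinset _ _ _).2 hvw)
      (fun h => hvu ((mem_neighborFinset _ _ _).1 h))
  by_cases h2 : z = w
  · subst h2
    rw [switch_nbhd_w hvw hux hvu hwx hvx hwu hvu' hwx']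
    exact card_insert_erase ((mem_neighborFinset _ _ _).2 hvw.symm)
      (fun h => hwx ((mem_neighborFinset _ _ _).1 h))
  by_cases h3 : z = u
  · subst h3
    rw [switch_nbhd_u hvw hux hvu hwx hvx hwu hvu' hwx']
    exact card_insert_erase ((mem_neighborFinset _ _ _).2 hux)
      (fun h => hvu (((mem_neighborFinset _ _ _).1 h).symm))
  by_cases h4 : z = x
  · subst h4
    rw [switch_nbhd_x hvw hux hvu hwx hvx hwu hvu' hwx']
    exact card_insert_erase ((mem_neighborFinset _ _ _).2 hux.symm)
      (fun h => hwx (((mem_neighborFinset _ _ _).1 h).symm))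
  · rw [switch_nbhd_other hvw hux hvu hwx hvx hwu hvu' hwx' h1 h2 h3 h4]
end

/-- There is a graph with the same degrees in which the neighbors of `v`
have the largest degrees. -/
lemma exists_good_graph (G : SimpleGraph V) (v : V) :
    ∃ G' : SimpleGraph V, (∀ z, G'.degree z = G.degree z) ∧
      ∀ w u, G'.Adj v w → ¬ G'.Adj v u → u ≠ v → G.degree u ≤ G.degree w := by
  classical
  set s : Finset (SimpleGraph V) :=
    Finset.univ.filter (fun H => ∀ z, H.degree z = G.degree z) with hs
  have hGs : G ∈ s := by simp [hs]
  obtain ⟨H, hHs, hmax⟩ := Finset.exists_max_image s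
    (fun H => ∑ z ∈ H.neighborFinset v, G.degree z) ⟨G, hGs⟩
  have hHdeg : ∀ z, H.degree z = G.degree z := by
    simpa [hs] using hHs
  refine ⟨H, hHdeg, ?_⟩
  by_contra hbad
  push_neg at hbad
  obtain ⟨w, u, hvw, hvu, huv, hdeg⟩ := hbad
  -- find x adjacent to u, not adjacent to w, x ≠ w
  have hvNw : v ∈ H.neighborFinset w := (mem_neighborFinset _ _ _).2 hvw.symm
  have hvNu : v ∉ H.neighborFinset u := fun h => hvu ((mem_neighborFinset _ _ _).1 h).symm
  have hx : ∃ x ∈ (H.neighborFinset u).erase w, x ∉ H.neighborFinset w := by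
    by_contra hc
    push_neg at hc
    have hsub : (H.neighborFinset u).erase w ⊆ (H.neighborFinset w).erase v := by
      intro y hy
      exact Finset.mem_erase.2 ⟨fun h => hvNu (h ▸ Finset.mem_of_mem_erase hy), hc y hy⟩
    have h1 : (H.neighborFinset u).card - 1 ≤ ((H.neighborFinset u).erase w).card := by
      rw [Finset.card_erase_eq_ite]; split <;> omega
    have h2 := Finset.card_le_card hsub
    rw [Finset.card_erase_of_mem hvNw] at h2
    have h3 : 1 ≤ (H.neighborFinset w).card := Finset.card_pos.2 ⟨v, hvNw⟩
    rw [card_neighborFinset_eq_degree, hHdeg] at *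
    omega
  obtain ⟨x, hxu, hxw⟩ := hx
  obtain ⟨hxw', hxNu⟩ := Finset.mem_erase.1 hxu
  have hux : H.Adj u x := (mem_neighborFinset _ _ _).1 hxNu
  have hwx : ¬ H.Adj w x := fun h => hxw ((mem_neighborFinset _ _ _).2 h)
  have hvx : v ≠ x := fun h => hvNu (h ▸ hxNu)
  have hwu : w ≠ u := fun h => by rw [h] at hdeg; omega
  have hvu' : v ≠ u := huv.symm
  have hwx' : w ≠ x := hxw'.symm
  set H₂ := switchGraph H v w u x with hH₂
  have hH₂deg : ∀ z, H₂.degree z = G.degree z := fun z =>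
    (switch_degree hvw hux hvu hwx hvx hwu hvu' hwx' z).trans (hHdeg z)
  have hH₂s : H₂ ∈ s := by simp [hs, hH₂deg]
  have hN : H₂.neighborFinset v = insert u ((H.neighborFinset v).erase w) :=
    switch_nbhd_v hvw hux hvu hwx hvx hwu hvu' hwx'
  have hle := hmax H₂ hH₂s
  rw [hN] at hle
  have huNv : u ∉ (H.neighborFinset v).erase w :=
    fun h => hvu ((mem_neighborFinset _ _ _).1 (Finset.mem_of_mem_erase h))
  rw [Finset.sum_insert huNv] at hle
  have hwNv : w ∈ H.neighborFinset v := (mem_neighborFinset _ _ _).2 hvw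
  have hsplit : ∑ z ∈ H.neighborFinset v, G.degree z
      = G.degree w + ∑ z ∈ (H.neighborFinset v).erase w, G.degree z :=
    (Finset.add_sum_erase _ _ hwNv).symm
  omega

section delete
variable (G : SimpleGraph V) (v : V)

/-- The graph with `v` deleted. -/
def delVert : SimpleGraph {z : V // z ≠ v} where
  Adj a b := G.Adj ↑a ↑b
  symm := ⟨fun a b h => h.symm⟩
  loopless := ⟨fun a h => G.irrefl h⟩

lemma delVert_degree (a : {z : V // z ≠ v}) :
    (delVert G v).degree a = ((G.neighborFinset ↑a).erase v).card := by
  rw [← card_neighborFinset_eq_degree]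
  rw [← Finset.card_map ⟨Subtype.val, Subtype.val_injective⟩]
  congr 1
  ext z
  simp only [Finset.mem_map, mem_neighborFinset, Finset.mem_erase, Function.Embedding.coeFn_mk]
  constructor
  · rintro ⟨b, hb, rfl⟩
    exact ⟨b.2, hb⟩
  · rintro ⟨hz, hadj⟩
    exact ⟨⟨z, hz⟩, hadj, rfl⟩

end delete

/-- Transfer a graph on a fintype to `Fin (card)`, keeping the degree multiset. -/
lemma graphical_of_graph {W : Type*} [Fintype W] (H : SimpleGraph W) (l : List ℕ)
    (h : Finset.univ.val.map (fun z => H.degree z) = (l : Multiset ℕ)) : Graphical l := by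
  classical
  set e : W ≃ Fin (Fintype.card W) := Fintype.equivFin W with he
  refine ⟨Fintype.card W, SimpleGraph.comap (⇑e.symm) H, ?_⟩
  have hdeg : ∀ a : Fin (Fintype.card W),
      (SimpleGraph.comap (⇑e.symm) H).degree a = H.degree (e.symm a) := by
    intro a
    rw [← card_neighborFinset_eq_degree, ← card_neighborFinset_eq_degree]
    rw [← Finset.card_map e.toEmbedding]
    congr 1
    ext z
    simp only [Finset.mem_map, mem_neighborFinset, comap_adj, Equiv.toEmbedding_apply]
    constructor
    · intro hz
      exact ⟨e.symm z, by simpa using hz, by simp⟩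
    · rintro ⟨b, hb, rfl⟩
      simpa using hb
  calc Finset.univ.val.map (fun a => (SimpleGraph.comap (⇑e.symm) H).degree a)
      = Finset.univ.val.map (fun a => H.degree (e.symm a)) := by
        exact Multiset.map_congr rfl (fun a _ => hdeg a)
    _ = (Finset.univ.val.map e.symm).map (fun z => H.degree z) := by
        rw [Multiset.map_map]; rfl
    _ = Finset.univ.val.map (fun z => H.degree z) := by
        congr 1
        have := Finset.map_univ_equiv e.symm
        calc Finset.univ.val.map ⇑e.symm
            = (Finset.univ.map e.symm.toEmbedding).val := by rw [Finset.map_val]; rfl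
          _ = (Finset.univ : Finset W).val := by rw [this]
    _ = (l : Multiset ℕ) := h

lemma sorted_split {t : List ℕ} {d : ℕ} (hs : t.Pairwise (· ≥ ·)) (A B : Multiset ℕ)
    (hAB : A + B = (t : Multiset ℕ)) (hcard : Multiset.card A = d)
    (hle : ∀ a ∈ A, ∀ b ∈ B, b ≤ a) :
    ((t.take d : List ℕ) : Multiset ℕ) = A ∧ ((t.drop d : List ℕ) : Multiset ℕ) = B := by
  classical
  set lA := A.sort (· ≥ ·) with hlA
  set lB := B.sort (· ≥ ·) with hlB
  have hA : (lA : Multiset ℕ) = A := Multiset.sort_eq _ _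
  have hB : (lB : Multiset ℕ) = B := Multiset.sort_eq _ _
  have hsA : lA.Pairwise (· ≥ ·) := Multiset.pairwise_sort _ _
  have hsB : lB.Pairwise (· ≥ ·) := Multiset.pairwise_sort _ _
  have hsort : (lA ++ lB).Pairwise (· ≥ ·) := by
    rw [List.pairwise_append]
    exact ⟨hsA, hsB, fun a ha b hb =>
      hle a (hA ▸ Multiset.mem_coe.2 ha) b (hB ▸ Multiset.mem_coe.2 hb)⟩
  have hperm : (lA ++ lB).Perm t := by
    rw [← Multiset.coe_eq_coe, ← Multiset.coe_add, hA, hB, hAB]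
  have ht : lA ++ lB = t := List.Perm.eq_of_pairwise' hsort hs hperm
  have hlen : lA.length = d := by
    rw [← Multiset.coe_card, hA, hcard]
  constructor
  · rw [← ht, List.take_left' hlen, hA]
  · rw [← ht, List.drop_left' hlen, hB]


/-- Havel–Hakimi, converse direction: if the non-increasing sequence
`s : d₁, d₂, …, d_n` (`n ≥ 2`, `d₁ ≥ 1`) is graphical, then the derived sequence
`s₁ : d₂-1, …, d_{d₁+1}-1, d_{d₁+2}, …, d_n` is graphical. -/
theorem havel_hakimi_converse (d₁ : ℕ) (t : List ℕ)
    (hn : (d₁ :: t).length ≥ 2) (hd₁ : 1 ≤ d₁)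
    (hsorted : (d₁ :: t).Pairwise (· ≥ ·))
    (h : Graphical (d₁ :: t)) :
    Graphical ((t.take d₁).map (· - 1) ++ t.drop d₁) := by
  classical
  obtain ⟨k, G, hG⟩ := h
  -- find a vertex of degree d₁
  have hmem : d₁ ∈ Finset.univ.val.map (fun z => G.degree z) := by
    rw [hG]; exact Multiset.mem_coe.2 List.mem_cons_self
  obtain ⟨v, -, hv⟩ := Multiset.mem_map.1 hmem
  obtain ⟨G', hdeg, hgood⟩ := exists_good_graph G v
  set N := G'.neighborFinset v with hN
  have hNcard : N.card = d₁ :=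
    (card_neighborFinset_eq_degree G' v).trans (by rw [hdeg v, hv])
  set A : Multiset ℕ := N.val.map (fun z => G.degree z) with hA
  set Bf : Finset (Fin k) :=
    (Finset.univ.erase v).filter (fun z => ¬ G'.Adj v z) with hBf
  set B : Multiset ℕ := Bf.val.map (fun z => G.degree z) with hB
  have hNsub : (Finset.univ.erase v).filter (fun z => G'.Adj v z) = N := by
    ext z
    simp only [Finset.mem_filter, Finset.mem_erase, Finset.mem_univ, and_true, hN,
      mem_neighborFinset, true_and]
    exact ⟨fun h => h.2, fun h => ⟨(G'.ne_of_adj h).symm, h⟩⟩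
  have hsplitval : (Finset.univ.erase v).val
      = N.val + Bf.val := by
    rw [← hNsub, hBf, Finset.filter_val, Finset.filter_val]
    exact (Multiset.filter_add_not _ _).symm
  -- degrees on the rest give t
  have hvt : (Finset.univ.erase v).val.map (fun z => G.degree z) = (t : Multiset ℕ) := by
    have h1 : (Finset.univ : Finset (Fin k)).val
        = v ::ₘ (Finset.univ.erase v).val := by
      rw [Finset.erase_val]
      exact (Multiset.cons_erase (Finset.mem_univ_val v)).symm
    rw [h1, Multiset.map_cons, hv, ← Multiset.cons_coe] at hG
    exact (Multiset.cons_inj_right _).1 hG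
  have hABt : A + B = (t : Multiset ℕ) := by
    rw [hA, hB, ← Multiset.map_add, ← hsplitval, hvt]
  have hle : ∀ a ∈ A, ∀ b ∈ B, b ≤ a := by
    intro a ha b hb
    obtain ⟨w, hw, rfl⟩ := Multiset.mem_map.1 ha
    obtain ⟨u, hu, rfl⟩ := Multiset.mem_map.1 hb
    have hw' : G'.Adj v w := (mem_neighborFinset _ _ _).1 hw
    have hu' := Finset.mem_filter.1 (Finset.mem_def.2 hu)
    exact hgood w u hw' hu'.2 (Finset.mem_erase.1 hu'.1).1
  obtain ⟨htake, hdrop⟩ := sorted_split (d := d₁) ((List.pairwise_cons.1 hsorted).2) A B hABt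
    (by rw [hA, Multiset.card_map]; exact hNcard) hle
  -- the deleted graph
  apply graphical_of_graph (delVert G' v)
  have hemb : (Finset.univ : Finset {z : Fin k // z ≠ v}).map
      ⟨Subtype.val, Subtype.val_injective⟩ = Finset.univ.erase v := by
    ext z
    simp only [Finset.mem_map, Finset.mem_univ, true_and, Function.Embedding.coeFn_mk,
      Finset.mem_erase, and_true]
    constructor
    · rintro ⟨b, hb⟩
      exact hb ▸ b.2
    · intro hz
      exact ⟨⟨z, hz⟩, rfl⟩
  have hval : (Finset.univ : Finset {z : Fin k // z ≠ v}).val.map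
        (Subtype.val) = (Finset.univ.erase v).val := by
    rw [← hemb, Finset.map_val]
    exact Multiset.map_congr rfl (fun a _ => rfl)
  have hcast : (Finset.univ : Finset {z : Fin k // z ≠ v}).val.map
        (fun a : {z : Fin k // z ≠ v} => ((G'.neighborFinset ↑a).erase v).card)
      = (Finset.univ.erase v).val.map (fun z => ((G'.neighborFinset z).erase v).card) := by
    rw [← hval, Multiset.map_map]
    exact Multiset.map_congr rfl (fun a _ => rfl)
  calc Finset.univ.val.map (fun a => (delVert G' v).degree a)
      = (Finset.univ : Finset {z : Fin k // z ≠ v}).val.map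
          (fun a : {z : Fin k // z ≠ v} => ((G'.neighborFinset ↑a).erase v).card) :=
        Multiset.map_congr rfl (fun a _ => delVert_degree G' v a)
    _ = (Finset.univ.erase v).val.map (fun z => ((G'.neighborFinset z).erase v).card) := hcast
    _ = N.val.map (fun z => ((G'.neighborFinset z).erase v).card)
        + Bf.val.map (fun z => ((G'.neighborFinset z).erase v).card) := by
        rw [hsplitval, Multiset.map_add]
    _ = A.map (· - 1) + B := by
        congr 1
        · rw [hA, Multiset.map_map]
          refine Multiset.map_congr rfl (fun z hz => ?_)
          have hzv : G'.Adj v z := (mem_neighborFinset _ _ _).1 hz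
          have : v ∈ G'.neighborFinset z := (mem_neighborFinset _ _ _).2 hzv.symm
          rw [Finset.card_erase_of_mem this, card_neighborFinset_eq_degree, hdeg z]
          rfl
        · rw [hB]
          refine Multiset.map_congr rfl (fun z hz => ?_)
          have hzv : ¬ G'.Adj v z := (Finset.mem_filter.1 (Finset.mem_def.2 hz)).2
          have : v ∉ G'.neighborFinset z :=
            fun h => hzv ((mem_neighborFinset _ _ _).1 h).symm
          rw [Finset.erase_eq_of_notMem this, card_neighborFinset_eq_degree, hdeg z]
    _ = (((t.take d₁).map (· - 1) ++ t.drop d₁ : List ℕ) : Multiset ℕ) := by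
        rw [← htake, ← hdrop, Multiset.map_coe, ← Multiset.coe_add]
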